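/- arXiv:2112.12840 — 3 statements merged into one kernel-verified Lean document; each statement's English description precedes it below -/
import Mathlib

section
/- Let K be a field, π a nonzero element of K, K̄ a fixed algebraic closure of K, n ≥ 1 an integer, and α ∈ K̄ an element with α^n = π. Then there exists a family (π^{1/m})_{m ≥ 1} of elements of K̄ such that π^{1/1} = π, (π^{1/(m₁m₂)})^{m₂} = π^{1/m₁} for all integers m₁, m₂ ≥ 1, and moreover π^{1/n} = α. -/
/-- Let `K` be a field, `π` a nonzero element of `K`, `K̄` a fixed algebraic
closure of `K`, `n ≥ 1` an integer, and `α ∈ K̄` with `α^n = π`. Then there exists a family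
`(π^{1/m})_{m ≥ 1}` of elements of `K̄` such that `π^{1/1} = π`,
`(π^{1/(m₁m₂)})^{m₂} = π^{1/m₁}` for all `m₁, m₂ ≥ 1`, and moreover `π^{1/n} = α`. -/
theorem exists_compatible_system_of_roots_through
    {K Kbar : Type*} [Field K] [Field Kbar] [Algebra K Kbar] [IsAlgClosure K Kbar]
    (π : K) (hπ : π ≠ 0) (n : ℕ) (hn : 1 ≤ n) (α : Kbar)
    (hα : α ^ n = algebraMap K Kbar π) :
    ∃ r : ℕ → Kbar,
      r 1 = algebraMap K Kbar π ∧
      (∀ m₁ m₂ : ℕ, 1 ≤ m₁ → 1 ≤ m₂ → (r (m₁ * m₂)) ^ m₂ = r m₁) ∧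
      r n = α := by
  haveI : IsAlgClosed Kbar := IsAlgClosure.isAlgClosed K
  choose f hf using fun (x : Kbar) (k : ℕ) =>
    IsAlgClosed.exists_pow_nat_eq x (n := k + 1) (Nat.succ_pos k)
  -- the tower s k = π^{1/(n·k!)}, with s 0 = α
  set s : ℕ → Kbar := fun k => Nat.rec α (fun k ih => f ih k) k with hs
  have hstep : ∀ k, s (k + 1) ^ (k + 1) = s k := fun k => hf (s k) k
  have key : ∀ j k, j ≤ k → s k ^ (k.factorial / j.factorial) = s j := by
    intro j k hjk
    induction k with
    | zero => simp [Nat.le_zero.mp hjk]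
    | succ k ih =>
      rcases Nat.lt_or_ge j (k + 1) with h | h
      · have hj : j ≤ k := Nat.lt_succ_iff.mp h
        have hdvd : j.factorial ∣ k.factorial := Nat.factorial_dvd_factorial hj
        have he : (k + 1).factorial / j.factorial
            = (k + 1) * (k.factorial / j.factorial) := by
          rw [Nat.factorial_succ, Nat.mul_div_assoc _ hdvd]
        rw [he, pow_mul, hstep, ih hj]
      · have : j = k + 1 := le_antisymm hjk h
        subst this
        rw [Nat.div_self (Nat.factorial_pos _), pow_one]
  -- the system
  refine ⟨fun m => s m ^ (n * m.factorial / m), ?_, ?_, ?_⟩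
  · have h1 : s 1 = α := by
      have := hstep 0
      simpa [show s 0 = α from rfl] using this
    simp [h1, hα]
  · intro m₁ m₂ hm₁ hm₂
    have hk : m₁ ≤ m₁ * m₂ := Nat.le_mul_of_pos_right m₁ hm₂
    have hfd : m₁.factorial ∣ (m₁ * m₂).factorial := Nat.factorial_dvd_factorial hk
    have hmd : m₁ ∣ m₁.factorial := Nat.dvd_factorial hm₁ le_rfl
    have hkd : (m₁ * m₂) ∣ (m₁ * m₂).factorial :=
      Nat.dvd_factorial (Nat.mul_pos hm₁ hm₂) le_rfl
    -- exponent computation 1 : (n·(m₁m₂)!/(m₁m₂)) · m₂ = n·(m₁m₂)!/m₁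
    have e1 : n * (m₁ * m₂).factorial / (m₁ * m₂) * m₂ = n * (m₁ * m₂).factorial / m₁ := by
      obtain ⟨t, ht⟩ := hkd
      rw [ht, show n * (m₁ * m₂ * t) = m₁ * m₂ * (n * t) by ring,
        Nat.mul_div_cancel_left _ (Nat.mul_pos hm₁ hm₂),
        show m₁ * m₂ * (n * t) = m₁ * (m₂ * (n * t)) by ring,
        Nat.mul_div_cancel_left _ hm₁]
      ring
    -- exponent computation 2 : ((m₁m₂)!/m₁!) · (n·m₁!/m₁) = n·(m₁m₂)!/m₁
    have e2 : (m₁ * m₂).factorial / m₁.factorial * (n * m₁.factorial / m₁)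
        = n * (m₁ * m₂).factorial / m₁ := by
      obtain ⟨a, ha⟩ := hfd
      obtain ⟨b, hb⟩ := hmd
      have hm₁f : 0 < m₁.factorial := Nat.factorial_pos _
      rw [ha, Nat.mul_div_cancel_left _ hm₁f, hb,
        show n * (m₁ * b) = m₁ * (n * b) by ring, Nat.mul_div_cancel_left _ hm₁,
        show n * (m₁ * b * a) = m₁ * (a * (n * b)) by ring,
        Nat.mul_div_cancel_left _ hm₁]
    calc (s (m₁ * m₂) ^ (n * (m₁ * m₂).factorial / (m₁ * m₂))) ^ m₂
        = s (m₁ * m₂) ^ (n * (m₁ * m₂).factorial / m₁) := by rw [← pow_mul, e1]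
      _ = (s (m₁ * m₂) ^ ((m₁ * m₂).factorial / m₁.factorial)) ^ (n * m₁.factorial / m₁) := by
          rw [← pow_mul, e2]
      _ = s m₁ ^ (n * m₁.factorial / m₁) := by rw [key m₁ (m₁ * m₂) hk]
  · have hnd : n ∣ n.factorial := Nat.dvd_factorial hn le_rfl
    have e : n * n.factorial / n = n.factorial := by
      rw [Nat.mul_div_cancel_left _ hn]
    show s n ^ (n * n.factorial / n) = α
    rw [e]
    have := key 0 n (Nat.zero_le n)
    simpa [show s 0 = α from rfl] using this
end

section
/- Let L be a field, v : L^× → ℤ an additive valuation, and G a finite group acting faithfully on L by field automorphisms such that v(σ(x)) = v(x) for every σ ∈ G and every nonzero x ∈ L. Let K = L^G be the fixed field and let k ⊆ K be a subfield with v(k^×) = ℤ. Let O_v be the valuation ring of v, L₀ its residue field, and p = char(L₀) ≥ 0. Assume that G is weakly tame at p, i.e., either p = 0, or p > 0 and G has no nontrivial normal p-subgroup. Then the induced action of G on the residue field L₀ is faithful. -/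
section Aux

variable {L : Type*} [Field L] (v : L → ℤ)

private lemma vval_one (hmul : ∀ x y : L, x ≠ 0 → y ≠ 0 → v (x * y) = v x + v y) :
    v 1 = 0 := by
  have h := hmul 1 1 one_ne_zero one_ne_zero
  rw [mul_one] at h; omega

private lemma vval_neg (hmul : ∀ x y : L, x ≠ 0 → y ≠ 0 → v (x * y) = v x + v y)
    (x : L) (hx : x ≠ 0) : v (-x) = v x := by
  have h1 : v ((-1 : L) * (-1)) = v (-1 : L) + v (-1) := hmul _ _ (by norm_num) (by norm_num)
  rw [show ((-1 : L) * (-1)) = 1 by ring, vval_one v hmul] at h1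
  have h2 := hmul (-1) x (by norm_num) hx
  rw [neg_one_mul] at h2
  omega

private lemma vval_add01 (hadd : ∀ x y : L, x ≠ 0 → y ≠ 0 → x + y ≠ 0 →
      min (v x) (v y) ≤ v (x + y))
    (c : ℤ) (a b : L) (ha : a = 0 ∨ c ≤ v a) (hb : b = 0 ∨ c ≤ v b) :
    a + b = 0 ∨ c ≤ v (a + b) := by
  by_cases ha0 : a = 0
  · subst ha0; simpa using hb
  by_cases hb0 : b = 0
  · subst hb0; simpa using ha
  by_cases hab : a + b = 0
  · exact Or.inl hab
  · right
    have := hadd a b ha0 hb0 hab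
    have ha' := ha.resolve_left ha0
    have hb' := hb.resolve_left hb0
    omega

private lemma vval_sum {ι : Type*}
    (hadd : ∀ x y : L, x ≠ 0 → y ≠ 0 → x + y ≠ 0 → min (v x) (v y) ≤ v (x + y))
    (c : ℤ) (s : Finset ι) (f : ι → L)
    (h : ∀ i ∈ s, f i = 0 ∨ c ≤ v (f i)) :
    (∑ i ∈ s, f i) = 0 ∨ c ≤ v (∑ i ∈ s, f i) := by
  classical
  induction s using Finset.cons_induction with
  | empty => simp
  | cons a s ha ih =>
    rw [Finset.sum_cons]
    exact vval_add01 v hadd c _ _ (h a (Finset.mem_cons_self a s))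
      (ih fun i hi => h i (Finset.mem_cons_of_mem hi))

end Aux

/-- Let `L` be a field with an additive valuation `v : L^× → ℤ`, and let `G`
be a finite group acting faithfully on `L` by field automorphisms preserving `v`. Let
`K = L^G`, let `k ⊆ K` be a subfield with `v(k^×) = ℤ`, and let `p ≥ 0` be the characteristic
of the residue field `L₀` of `v` (encoded by: for `n : ℕ`, the image of `n` lies in the
maximal ideal `{x : x = 0 ∨ v x ≥ 1}` iff `p ∣ n`). If `G` is weakly tame at `p` (either
`p = 0`, or `p > 0` and `G` has no nontrivial normal `p`-subgroup), then the induced action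
of `G` on `L₀` is faithful: any `σ ∈ G` acting trivially on the residue field (i.e. with
`σ • x ≡ x` mod the maximal ideal for every `x` in the valuation ring) is the identity. -/
theorem residue_action_faithful
    {L : Type*} [Field L] (v : L → ℤ)
    (hmul : ∀ x y : L, x ≠ 0 → y ≠ 0 → v (x * y) = v x + v y)
    (hadd : ∀ x y : L, x ≠ 0 → y ≠ 0 → x + y ≠ 0 → min (v x) (v y) ≤ v (x + y))
    {G : Type*} [Group G] [Finite G] [MulSemiringAction G L] [FaithfulSMul G L]
    (hinv : ∀ (σ : G) (x : L), x ≠ 0 → v (σ • x) = v x)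
    (k : Subfield L) (hk : k ≤ FixedPoints.subfield G L)
    (hsurj : ∀ m : ℤ, ∃ x ∈ k, x ≠ 0 ∧ v x = m)
    (p : ℕ) (hp : ∀ n : ℕ, ((n : L) = 0 ∨ 1 ≤ v (n : L)) ↔ p ∣ n)
    (htame : p = 0 ∨ (0 < p ∧ ∀ Q : Subgroup G, Q.Normal → IsPGroup p ↥Q → Q = ⊥)) :
    ∀ σ : G, (∀ x : L, x ≠ 0 → 0 ≤ v x → (σ • x - x = 0 ∨ 1 ≤ v (σ • x - x))) → σ = 1 := by
  have hvone : v 1 = 0 := vval_one v hmul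
  have hvneg : ∀ x : L, x ≠ 0 → v (-x) = v x := vval_neg v hmul
  have hvinv : ∀ x : L, x ≠ 0 → v x⁻¹ = -v x := by
    intro x hx
    have := hmul x x⁻¹ hx (inv_ne_zero hx)
    rw [mul_inv_cancel₀ hx, hvone] at this
    omega
  have hsmul0 : ∀ (g : G) (x : L), g • x = 0 → x = 0 := by
    intro g x h
    have := congrArg (g⁻¹ • ·) h
    simpa using this
  have hnatfix : ∀ (g : G) (n : ℕ), g • (n : L) = n :=
    fun g n => map_natCast (MulSemiringAction.toRingHom G L g) n
  have hinvfix : ∀ (g : G) (a : L), g • a⁻¹ = (g • a)⁻¹ := by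
    intro g a
    by_cases ha : a = 0
    · simp [ha]
    have h1 : g • a⁻¹ * (g • a) = 1 := by
      rw [← smul_mul', inv_mul_cancel₀ ha, smul_one]
    exact eq_inv_of_mul_eq_one_left h1
  have hvnat : ∀ n : ℕ, (n : L) ≠ 0 → 0 ≤ v (n : L) := by
    intro n
    induction n with
    | zero => simp
    | succ m ih =>
      intro h
      by_cases hm : (m : L) = 0
      · rw [Nat.cast_succ, hm, zero_add, hvone]
      · rw [Nat.cast_succ] at h ⊢
        have hmin := hadd (m : L) 1 hm one_ne_zero h
        have := ih hm
        rw [hvone] at hmin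
        omega
  -- the main lemma
  have main : ∀ σ : G,
      (∀ x : L, x ≠ 0 → 0 ≤ v x → (σ • x - x = 0 ∨ 1 ≤ v (σ • x - x))) →
      ∀ n : ℕ, σ ^ n = 1 → (n : L) ≠ 0 → v (n : L) = 0 → σ = 1 := by
    intro σ hσ n hord hn0 hvn
    -- Step B
    have B : ∀ x : L, x ≠ 0 → σ • x = x ∨ v x + 1 ≤ v (σ • x - x) := by
      intro x hx
      obtain ⟨c, hck, hc0, hvc⟩ := hsurj (v x)
      have hcfix : σ • c = c := hk hck σ
      set u := x * c⁻¹ with hu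
      have hu0 : u ≠ 0 := mul_ne_zero hx (inv_ne_zero hc0)
      have hvu : v u = 0 := by
        rw [hu, hmul x c⁻¹ hx (inv_ne_zero hc0), hvinv c hc0]; omega
      have hxuc : x = u * c := by rw [hu, mul_assoc, inv_mul_cancel₀ hc0, mul_one]
      have hsx : σ • x - x = (σ • u - u) * c := by
        rw [hxuc, smul_mul', hcfix]; ring
      by_cases hfix : σ • u = u
      · left; rw [hxuc, smul_mul', hfix, hcfix]
      · right
        have hd : σ • u - u ≠ 0 := sub_ne_zero_of_ne hfix
        have h1 : 1 ≤ v (σ • u - u) := (hσ u hu0 (le_of_eq hvu.symm)).resolve_left hd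
        rw [hsx, hmul _ _ hd hc0]
        omega
    -- Step Q by induction
    have Q : ∀ m : ℕ, ∀ x : L, x ≠ 0 → σ • x = x ∨ v x + (m + 1 : ℤ) ≤ v (σ • x - x) := by
      intro m
      induction m with
      | zero => simpa using B
      | succ m ih =>
        intro x hx
        by_cases hne : σ • x = x
        · exact Or.inl hne
        right
        have hw : v x + (m + 1 : ℤ) ≤ v (σ • x - x) := (ih x hx).resolve_left hne
        set s : L := ∑ i ∈ Finset.range n, σ ^ i • x with hs
        have hσs : σ • s = s := by
          rw [hs, Finset.smul_sum]
          have h1 : ∀ i : ℕ, σ • σ ^ i • x = σ ^ (i + 1) • x := by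
            intro i; rw [pow_succ', mul_smul]
          have e1 : ∑ i ∈ Finset.range (n + 1), σ ^ i • x
              = (∑ i ∈ Finset.range n, σ ^ (i + 1) • x) + σ ^ 0 • x :=
            Finset.sum_range_succ' _ n
          have e2 : ∑ i ∈ Finset.range (n + 1), σ ^ i • x
              = (∑ i ∈ Finset.range n, σ ^ i • x) + σ ^ n • x :=
            Finset.sum_range_succ _ n
          have e3 : σ ^ n • x = σ ^ 0 • x := by rw [hord, pow_zero]
          calc ∑ i ∈ Finset.range n, σ • σ ^ i • x
              = ∑ i ∈ Finset.range n, σ ^ (i + 1) • x := by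
                exact Finset.sum_congr rfl fun i _ => h1 i
            _ = ∑ i ∈ Finset.range n, σ ^ i • x := by
                have := e1.symm.trans e2
                rw [e3] at this
                exact add_right_cancel this
        set y : L := s * (n : L)⁻¹ with hy
        have hσy : σ • y = y := by
          rw [hy, smul_mul', hσs, hinvfix, hnatfix]
        set z : L := x - y with hz
        have hxz : σ • x - x = σ • z - z := by
          rw [hz, smul_sub, hσy]; ring
        have hny : (n : L) * y = s := by
          rw [hy]; field_simp
        have hnz : (n : L) * z = ∑ i ∈ Finset.range n, (x - σ ^ i • x) := by
          rw [Finset.sum_sub_distrib, Finset.sum_const, Finset.card_range, nsmul_eq_mul,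
            hz, mul_sub, hny, hs]
        have hterm : ∀ i ∈ Finset.range n,
            x - σ ^ i • x = 0 ∨ v x + (m + 1 : ℤ) ≤ v (x - σ ^ i • x) := by
          intro i _
          have htel : σ ^ i • x - x = ∑ j ∈ Finset.range i, σ ^ j • (σ • x - x) := by
            have h0 := Finset.sum_range_sub (fun j => σ ^ j • x) i
            rw [pow_zero, one_smul] at h0
            rw [← h0]
            refine Finset.sum_congr rfl fun j _ => ?_
            rw [smul_sub, pow_succ, mul_smul]
          have hd : σ • x - x ≠ 0 := sub_ne_zero_of_ne hne
          have hsum := vval_sum v hadd (v x + (m + 1 : ℤ)) (Finset.range i)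
            (fun j => σ ^ j • (σ • x - x)) (by
              intro j _
              right
              rw [hinv (σ ^ j) _ hd]
              exact hw)
          rw [← htel] at hsum
          by_cases hzero : σ ^ i • x - x = 0
          · left; rw [show x - σ ^ i • x = -(σ ^ i • x - x) by ring, hzero, neg_zero]
          · right
            have h := hsum.resolve_left hzero
            rw [show x - σ ^ i • x = -(σ ^ i • x - x) by ring, hvneg _ hzero]
            exact h
        have hzsum := vval_sum v hadd (v x + (m + 1 : ℤ)) (Finset.range n) _ hterm
        rw [← hnz] at hzsum
        by_cases hz0 : z = 0
        · exfalso
          apply hne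
          have : σ • x - x = 0 := by rw [hxz, hz0, smul_zero, sub_zero]
          exact sub_eq_zero.mp this
        · have hnz0 : (n : L) * z ≠ 0 := mul_ne_zero hn0 hz0
          have hvzval : v ((n : L) * z) = v z := by
            rw [hmul _ _ hn0 hz0, hvn]; ring
          have hvz : v x + (m + 1 : ℤ) ≤ v z := by
            have := hzsum.resolve_left hnz0
            omega
          rcases B z hz0 with h | h
          · exfalso
            apply hne
            have : σ • x - x = 0 := by rw [hxz, h, sub_self]
            exact sub_eq_zero.mp this
          · rw [hxz]
            push_cast
            push_cast at hvz
            omega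
    -- conclude σ • x = x for all x
    have hall : ∀ x : L, σ • x = x := by
      intro x
      by_cases hx : x = 0
      · rw [hx, smul_zero]
      by_contra hne
      have h := fun m : ℕ => (Q m x hx).resolve_left hne
      have h1 := h (v (σ • x - x) - v x).toNat
      have h2 : (v (σ • x - x) - v x : ℤ) ≤ ((v (σ • x - x) - v x).toNat : ℤ) :=
        Int.self_le_toNat _
      omega
    exact eq_of_smul_eq_smul fun x => by rw [hall x, one_smul]
  -- now the two cases
  intro σ hσ
  rcases htame with hp0 | ⟨hppos, htame⟩
  · subst hp0
    set n := orderOf σ with hn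
    have hn0 : n ≠ 0 := (orderOf_pos σ).ne'
    have hnot : ¬ ((n : L) = 0 ∨ 1 ≤ v (n : L)) := by
      intro h
      exact hn0 (zero_dvd_iff.mp ((hp n).mp h))
    push_neg at hnot
    have hvn : v (n : L) = 0 := le_antisymm (by omega) (hvnat n hnot.1)
    exact main σ hσ n (pow_orderOf_eq_one σ) hnot.1 hvn
  · -- p > 0 : p is prime
    have hp1 : p ≠ 1 := by
      intro h
      have := (hp 1).mpr (by rw [h])
      rcases this with h1 | h1
      · rw [Nat.cast_one] at h1; exact one_ne_zero h1
      · rw [Nat.cast_one, hvone] at h1; omega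
    have hprime : p.Prime := by
      rw [Nat.prime_def]
      refine ⟨by omega, ?_⟩
      intro m hm
      obtain ⟨b, hb⟩ := hm
      have hpp : ((p : L) = 0 ∨ 1 ≤ v (p : L)) := (hp p).mpr dvd_rfl
      have key : p ∣ m ∨ p ∣ b := by
        by_cases hm0 : (m : L) = 0
        · exact Or.inl ((hp m).mp (Or.inl hm0))
        by_cases hb0 : (b : L) = 0
        · exact Or.inr ((hp b).mp (Or.inl hb0))
        have hmb : (p : L) = (m : L) * b := by rw [hb]; push_cast; ring
        rcases hpp with h | h
        · rw [hmb] at h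
          rcases mul_eq_zero.mp h with h | h
          · exact absurd h hm0
          · exact absurd h hb0
        · rw [hmb, hmul _ _ hm0 hb0] at h
          have h1 := hvnat m hm0
          have h2 := hvnat b hb0
          rcases (by omega : 1 ≤ v (m : L) ∨ 1 ≤ v (b : L)) with h3 | h3
          · exact Or.inl ((hp m).mp (Or.inr h3))
          · exact Or.inr ((hp b).mp (Or.inr h3))
      rcases key with h | h
      · right
        exact Nat.dvd_antisymm ⟨b, hb⟩ h
      · have hbp : b = p := Nat.dvd_antisymm ⟨m, by rw [hb]; ring⟩ h
        left
        rw [hbp] at hb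
        have : m * p = 1 * p := by rw [one_mul, ← hb]
        exact Nat.eq_of_mul_eq_mul_right hppos this
    -- the subgroup N
    let N : Subgroup G :=
      { carrier := {τ : G | ∀ x : L, x ≠ 0 → 0 ≤ v x → (τ • x - x = 0 ∨ 1 ≤ v (τ • x - x))}
        one_mem' := by intro x hx hvx; left; rw [one_smul, sub_self]
        mul_mem' := by
          intro a b ha hb x hx hvx
          have hbx0 : b • x ≠ 0 := fun h => hx (hsmul0 b x h)
          have e : (a * b) • x - x = (a • (b • x) - b • x) + (b • x - x) := by
            rw [mul_smul]; ring
          rw [e]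
          exact vval_add01 v hadd 1 _ _
            (ha (b • x) hbx0 (by rw [hinv b x hx]; exact hvx)) (hb x hx hvx)
        inv_mem' := by
          intro a ha x hx hvx
          have e : a⁻¹ • x - x = a⁻¹ • (x - a • x) := by
            rw [smul_sub, inv_smul_smul]
          by_cases hd : a • x - x = 0
          · left
            rw [e, show x - a • x = -(a • x - x) by ring, hd, neg_zero, smul_zero]
          · right
            have h := (ha x hx hvx).resolve_left hd
            have hd2 : x - a • x ≠ 0 := by
              intro h0; apply hd; rw [show a • x - x = -(x - a • x) by ring, h0, neg_zero]
            rw [e, hinv a⁻¹ _ hd2, show x - a • x = -(a • x - x) by ring, hvneg _ hd]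
            exact h }
    have hσN : σ ∈ N := hσ
    have hNnormal : N.Normal := by
      constructor
      intro a ha g x hx hvx
      have hgx0 : g⁻¹ • x ≠ 0 := fun h => hx (hsmul0 g⁻¹ x h)
      have e : (g * a * g⁻¹) • x - x = g • (a • (g⁻¹ • x) - g⁻¹ • x) := by
        rw [smul_sub, mul_smul, mul_smul, smul_inv_smul]
      by_cases hd : a • (g⁻¹ • x) - g⁻¹ • x = 0
      · left; rw [e, hd, smul_zero]
      · right
        have h := (ha (g⁻¹ • x) hgx0 (by rw [hinv g⁻¹ x hx]; exact hvx)).resolve_left hd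
        rw [e, hinv g _ hd]
        exact h
    have hNp : IsPGroup p N := by
      rintro ⟨τ, hτ⟩
      set m := orderOf τ with hm
      have hm0 : m ≠ 0 := (orderOf_pos τ).ne'
      refine ⟨m.factorization p, ?_⟩
      set a := m.factorization p with hadef
      have hτ' : τ ^ (p ^ a) ∈ N := N.pow_mem hτ _
      have hord : orderOf (τ ^ (p ^ a)) = m / p ^ a := by
        rw [orderOf_pow, ← hm, Nat.gcd_eq_right (Nat.ordProj_dvd m p)]
      have hndvd : ¬ p ∣ m / p ^ m.factorization p := Nat.not_dvd_ordCompl hprime hm0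
      have hmm0 : m / p ^ a ≠ 0 := (Nat.ordCompl_pos p hm0).ne'
      have hnot : ¬ (((m / p ^ a : ℕ) : L) = 0 ∨ 1 ≤ v ((m / p ^ a : ℕ) : L)) := by
        intro h
        exact hndvd ((hp _).mp h)
      push_neg at hnot
      have hvn : v ((m / p ^ a : ℕ) : L) = 0 :=
        le_antisymm (by omega) (hvnat _ hnot.1)
      have hτ1 : τ ^ (p ^ a) = 1 := by
        have := main (τ ^ (p ^ a)) hτ' (m / p ^ a)
          (by rw [← hord]; exact pow_orderOf_eq_one _) hnot.1 hvn
        exact this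
      exact Subtype.ext (by simpa using hτ1)
    have hbot := htame N hNnormal hNp
    rw [hbot] at hσN
    exact hσN
end

section
/- Let L be a field, v : L^× → ℤ an additive valuation, and G a finite group acting faithfully on L by field automorphisms such that v(σ(x)) = v(x) for every σ ∈ G and every nonzero x ∈ L. Let K = L^G and let k ⊆ K be a subfield with v(k^×) = ℤ. Let L₀ be the residue field of v, let K₀ be the residue field of the restriction of v to K (so K₀ embeds naturally in L₀), and let p = char(L₀) ≥ 0. Assume that G is weakly tame at p. Then the fixed field (L₀)^G of the induced G-action on L₀ equals the image of K₀ in L₀, and [L₀ : K₀] = |G|. -/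
set_option maxHeartbeats 2000000
set_option synthInstance.maxHeartbeats 1000000

open Module

private lemma aux_sum_val {L : Type*} [Field L] (v : L → ℤ)
    (hadd : ∀ x y : L, x ≠ 0 → y ≠ 0 → x + y ≠ 0 → min (v x) (v y) ≤ v (x + y))
    (c : ℤ) {ι : Type*} (s : Finset ι) (f : ι → L)
    (h : ∀ i ∈ s, f i ≠ 0 → c < v (f i)) :
    (∑ i ∈ s, f i) ≠ 0 → c < v (∑ i ∈ s, f i) := by
  classical
  refine Finset.sum_induction f (fun a => a ≠ 0 → c < v a) ?_ (by simp) h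
  intro a b pa pb hab
  rcases eq_or_ne a 0 with rfl | ha
  · simpa using pb (by simpa using hab)
  rcases eq_or_ne b 0 with rfl | hb
  · simpa using pa (by simpa using hab)
  have h1 := hadd a b ha hb hab
  have h2 := pa ha
  have h3 := pb hb
  have := min_le_left (v a) (v b)
  have := min_le_right (v a) (v b)
  rcases min_cases (v a) (v b) with ⟨h4, _⟩ | ⟨h4, _⟩ <;> omega

/-- Let `L` be a field with an additive valuation `v : L^× → ℤ` and `G` a
finite group acting faithfully on `L` by field automorphisms preserving `v`. Let `K = L^G`,
`k ⊆ K` a subfield with `v(k^×) = ℤ`, and let `p = char(L₀) ≥ 0`, where `L₀` is the residue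
field of `v`. Assume `G` is weakly tame at `p`. Then the fixed field `(L₀)^G` of the induced
`G`-action on `L₀` equals the image `K₀` of the residue field of `v|_K`, and
`[L₀ : K₀] = |G|`.

The residue field is presented as data: a subring `O` (the valuation ring, characterized by
`hO`), a field `L₀` with a surjective ring homomorphism `ρ : O → L₀` whose kernel is the
maximal ideal (characterized by `hker`), the induced `G`-action on `L₀` (characterized by
`hcompat`), and the subfield `K₀ = ρ(O ∩ K)` (characterized by `hK₀`). -/
theorem fixed_subfield_of_residue_eq_and_finrank
    {L : Type*} [Field L] (v : L → ℤ)
    (hmul : ∀ x y : L, x ≠ 0 → y ≠ 0 → v (x * y) = v x + v y)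
    (hadd : ∀ x y : L, x ≠ 0 → y ≠ 0 → x + y ≠ 0 → min (v x) (v y) ≤ v (x + y))
    {G : Type*} [Group G] [Finite G] [MulSemiringAction G L] [FaithfulSMul G L]
    (hinv : ∀ (σ : G) (x : L), x ≠ 0 → v (σ • x) = v x)
    (k : Subfield L) (hk : k ≤ FixedPoints.subfield G L)
    (hsurj : ∀ m : ℤ, ∃ x ∈ k, x ≠ 0 ∧ v x = m)
    (O : Subring L) (hO : ∀ x : L, x ∈ O ↔ (x = 0 ∨ 0 ≤ v x))
    (L₀ : Type*) [Field L₀] (ρ : ↥O →+* L₀)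
    (hρ : Function.Surjective ρ)
    (hker : ∀ x : ↥O, ρ x = 0 ↔ ((x : L) = 0 ∨ 1 ≤ v (x : L)))
    (p : ℕ) [CharP L₀ p]
    (htame : p = 0 ∨ (0 < p ∧ ∀ Q : Subgroup G, Q.Normal → IsPGroup p ↥Q → Q = ⊥))
    [MulSemiringAction G L₀]
    (hstable : ∀ (σ : G) (x : ↥O), σ • (x : L) ∈ O)
    (hcompat : ∀ (σ : G) (x : ↥O), ρ ⟨σ • (x : L), hstable σ x⟩ = σ • ρ x)
    (K₀ : Subfield L₀)
    (hK₀ : ∀ z : L₀, z ∈ K₀ ↔ ∃ x : ↥O, (∀ σ : G, σ • (x : L) = (x : L)) ∧ ρ x = z) :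
    FixedPoints.subfield G L₀ = K₀ ∧ Module.finrank ↥K₀ L₀ = Nat.card G := by
  classical
  have _inst := Fintype.ofFinite G
  -- basic valuation facts
  have hv1 : v 1 = 0 := by
    have h := hmul 1 1 one_ne_zero one_ne_zero
    rw [one_mul] at h; omega
  have hvinv : ∀ x : L, x ≠ 0 → v x⁻¹ = - v x := by
    intro x hx
    have h := hmul x x⁻¹ hx (inv_ne_zero hx)
    rw [mul_inv_cancel₀ hx, hv1] at h; omega
  have hvneg : ∀ x : L, x ≠ 0 → v (-x) = v x := by
    intro x hx
    have hm1 : v (-1 : L) = 0 := by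
      have h := hmul (-1) (-1) (by norm_num) (by norm_num)
      rw [neg_one_mul, neg_neg, hv1] at h; omega
    have h := hmul (-1) x (by norm_num) hx
    rw [neg_one_mul] at h; omega
  -- the σ-fixed elements: action fixed on L
  have hσfix : ∀ (σ : G) (x : L), x ∈ FixedPoints.subfield G L → σ • x = x := by
    intro σ x hx; exact hx σ
  -- inertia subgroup
  set φ := MulSemiringAction.toRingAut G L₀ with hφ
  set I : Subgroup G := φ.ker with hI
  have hImem : ∀ σ : G, σ ∈ I ↔ ∀ z : L₀, σ • z = z := by
    intro σ
    constructor
    · intro h z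
      have : φ σ = 1 := h
      have := congrArg (fun e => (e : RingAut L₀) z) this
      simpa [hφ, MulSemiringAction.toRingAut, MulSemiringAction.toRingEquiv] using this
    · intro h
      have : φ σ = 1 := by
        apply RingEquiv.ext
        intro z
        simpa [hφ, MulSemiringAction.toRingAut, MulSemiringAction.toRingEquiv] using h z
      exact this
  haveI hInorm : I.Normal := MonoidHom.normal_ker φ
  -- inertia elements satisfy the wildness property
  have hIW : ∀ σ ∈ I, ∀ x : L, x ≠ 0 → σ • x ≠ x → v x < v (σ • x - x) := by
    intro σ hσ x hx hne
    obtain ⟨c, hck, hc0, hvc⟩ := hsurj (v x)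
    have hcfix : σ • c = c := hσfix σ c (hk hck)
    set u := x * c⁻¹ with hu
    have hu0 : u ≠ 0 := mul_ne_zero hx (inv_ne_zero hc0)
    have hvu : v u = 0 := by
      rw [hu, hmul x c⁻¹ hx (inv_ne_zero hc0), hvinv c hc0]; omega
    have huO : u ∈ O := (hO u).mpr (Or.inr (by omega))
    have hσuO : σ • u ∈ O := hstable σ ⟨u, huO⟩
    set w : ↥O := ⟨σ • u, hσuO⟩ - ⟨u, huO⟩ with hw
    have hρw : ρ w = 0 := by
      rw [hw, map_sub, hcompat σ ⟨u, huO⟩]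
      have : σ • ρ ⟨u, huO⟩ = ρ ⟨u, huO⟩ := (hImem σ).mp hσ _
      rw [this, sub_self]
    have hwcoe : (w : L) = σ • u - u := rfl
    have hxcu : x = u * c := by rw [hu, mul_assoc, inv_mul_cancel₀ hc0, mul_one]
    have hkey : σ • x - x = (σ • u - u) * c := by
      rw [hxcu, smul_mul', hcfix, sub_mul]
    have hwne : (w : L) ≠ 0 := by
      rw [hwcoe]
      intro h0
      apply hne
      have h1 : σ • x - x = 0 := by rw [hkey, h0, zero_mul]
      exact sub_eq_zero.mp h1
    have hvw : 1 ≤ v (w : L) := by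
      rcases (hker w).mp hρw with h | h
      · exact absurd h hwne
      · exact h
    have : v (σ • x - x) = v (σ • u - u) + v c := by
      rw [hkey]
      exact hmul _ _ (by rw [← hwcoe]; exact hwne) hc0
    rw [hwcoe] at hvw
    omega
  -- elements of the inertia of prime order ℓ force ℓ = 0 in L₀
  have horder : ∀ σ : G, σ ∈ I → ∀ ℓ : ℕ, ℓ.Prime → σ ≠ 1 → σ ^ ℓ = 1 → (ℓ : L₀) = 0 := by
    intro σ hσ ℓ hℓ hσ1 hσℓ
    have hex : ∃ x : L, σ • x ≠ x := by
      by_contra hcon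
      push_neg at hcon
      exact hσ1 (FaithfulSMul.eq_of_smul_eq_smul (fun x => by rw [hcon x, one_smul]))
    obtain ⟨x, hxne⟩ := hex
    have hx0 : x ≠ 0 := by rintro rfl; simp at hxne
    obtain ⟨u, hu⟩ : ∃ u : L, u = σ • x - x := ⟨_, rfl⟩
    have hu0 : u ≠ 0 := hu ▸ sub_ne_zero.mpr hxne
    have hpow : ∀ i : ℕ, σ ^ i • u - u ≠ 0 → v u < v (σ ^ i • u - u) := by
      intro i
      induction i with
      | zero => intro h; exfalso; apply h; rw [pow_zero, one_smul, sub_self]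
      | succ i ih =>
        intro hne'
        have hstep : σ ^ (i+1) • u - u = σ • (σ ^ i • u - u) + (σ • u - u) := by
          rw [smul_sub, pow_succ', mul_smul]
          abel
        rw [hstep] at hne' ⊢
        have hBp : σ • u - u ≠ 0 → v u < v (σ • u - u) := by
          intro hBne
          exact hIW σ hσ u hu0 (fun h => hBne (by rw [h, sub_self]))
        have hAp : σ • (σ ^ i • u - u) ≠ 0 → v u < v (σ • (σ ^ i • u - u)) := by
          intro hAne
          have hA0 : σ ^ i • u - u ≠ 0 := fun h => hAne (by rw [h, smul_zero])
          rw [hinv σ _ hA0]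
          exact ih hA0
        rcases eq_or_ne (σ • (σ ^ i • u - u)) 0 with h1 | h1
        · rw [h1, zero_add] at hne' ⊢; exact hBp hne'
        rcases eq_or_ne (σ • u - u) 0 with h2 | h2
        · rw [h2, add_zero] at hne' ⊢; exact hAp h1
        have h3 := hadd _ _ h1 h2 hne'
        have h4 := hAp h1
        have h5 := hBp h2
        rcases min_cases (v (σ • (σ ^ i • u - u))) (v (σ • u - u)) with ⟨h6, _⟩ | ⟨h6, _⟩ <;> omega
    have htel : ∑ i ∈ Finset.range ℓ, σ ^ i • u = 0 := by
      have hterm : ∀ i : ℕ, σ ^ i • u = σ ^ (i+1) • x - σ ^ i • x := by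
        intro i
        rw [hu, smul_sub, pow_succ, mul_smul]
      calc ∑ i ∈ Finset.range ℓ, σ ^ i • u
          = ∑ i ∈ Finset.range ℓ, (σ ^ (i+1) • x - σ ^ i • x) :=
            Finset.sum_congr rfl fun i _ => hterm i
        _ = σ ^ ℓ • x - σ ^ 0 • x := Finset.sum_range_sub (fun i => σ ^ i • x) ℓ
        _ = 0 := by simp [hσℓ]
    have hD : ∑ i ∈ Finset.range ℓ, (σ ^ i • u - u) = -((ℓ : L) * u) := by
      rw [Finset.sum_sub_distrib, htel, Finset.sum_const, Finset.card_range, zero_sub,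
        nsmul_eq_mul]
    have hDp : (ℓ : L) * u ≠ 0 → v u < v ((ℓ : L) * u) := by
      intro hne'
      have h1 : -((ℓ:L)*u) ≠ 0 := neg_ne_zero.mpr hne'
      have h2 := aux_sum_val v hadd (v u) (Finset.range ℓ) (fun i => σ ^ i • u - u)
        (fun i _ => hpow i) (by rw [hD]; exact h1)
      rw [hD, hvneg _ hne'] at h2
      exact h2
    rcases eq_or_ne ((ℓ : L)) 0 with hl0 | hl0
    · have hcast : ((ℓ : ↥O) : L) = 0 := by push_cast; exact hl0
      have hO0 : (ℓ : ↥O) = 0 := by exact_mod_cast hcast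
      rw [← map_natCast ρ ℓ, hO0, map_zero]
    · have hlu : (ℓ : L) * u ≠ 0 := mul_ne_zero hl0 hu0
      have h7 := hDp hlu
      rw [hmul _ _ hl0 hu0] at h7
      have hvl : 1 ≤ v ((ℓ : L)) := by omega
      have hlO : (ℓ : L) ∈ O := (hO _).mpr (Or.inr (by omega))
      have h8 : ρ ⟨(ℓ : L), hlO⟩ = 0 := (hker _).mpr (Or.inr hvl)
      have heq : (⟨(ℓ : L), hlO⟩ : ↥O) = (ℓ : ↥O) := by ext; push_cast; rfl
      rw [heq, map_natCast] at h8
      exact h8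
  have hIprime : ∀ σ : G, σ ∈ I → ∀ q : ℕ, q.Prime → q ∣ orderOf σ → (q : L₀) = 0 := by
    intro σ hσ q hq hdvd
    have hn0 : orderOf σ ≠ 0 := (orderOf_pos σ).ne'
    set n := orderOf σ with hn
    set τ := σ ^ (n / q) with hτ
    have hτI : τ ∈ I := Subgroup.pow_mem I hσ _
    have hτq : τ ^ q = 1 := by
      rw [hτ, ← pow_mul, Nat.div_mul_cancel hdvd, hn, pow_orderOf_eq_one]
    have hτ1 : τ ≠ 1 := by
      intro h1
      have hdq : n ∣ n / q := orderOf_dvd_of_pow_eq_one (by rw [← hτ]; exact h1)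
      have hpos : 0 < n := Nat.pos_of_ne_zero hn0
      have hlt : n / q < n := Nat.div_lt_self hpos hq.one_lt
      have hle : n ≤ n / q := Nat.le_of_dvd (Nat.div_pos (Nat.le_of_dvd hpos hdvd) hq.pos) hdq
      omega
    exact horder τ hτI q hq hτ1 hτq
  have hIbot : I = ⊥ := by
    rcases htame with hp0 | ⟨hppos, htame⟩
    · rw [eq_bot_iff]
      intro σ hσ
      rw [Subgroup.mem_bot]
      by_contra hσ1
      have hn1 : orderOf σ ≠ 1 := by simpa [orderOf_eq_one_iff] using hσ1
      obtain ⟨q, hq, hdvd⟩ := Nat.exists_prime_and_dvd hn1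
      have h0 := hIprime σ hσ q hq hdvd
      have hpq : p ∣ q := (CharP.cast_eq_zero_iff L₀ p q).mp h0
      rw [hp0] at hpq
      exact hq.ne_zero (zero_dvd_iff.mp hpq)
    · haveI : NeZero p := ⟨hppos.ne'⟩
      have hp : p.Prime := (CharP.char_is_prime_of_pos L₀ p).out
      apply htame I hInorm
      intro g
      set n := orderOf (g : G) with hn
      have hn0 : n ≠ 0 := (orderOf_pos _).ne'
      have huniq : ∀ {q : ℕ}, q.Prime → q ∣ n → q = p := by
        intro q hq hdvd
        have h0 := hIprime (g : G) g.2 q hq hdvd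
        have hpq : p ∣ q := (CharP.cast_eq_zero_iff L₀ p q).mp h0
        exact ((Nat.prime_dvd_prime_iff_eq hp hq).mp hpq).symm
      have hnp : n = p ^ n.primeFactorsList.length :=
        Nat.eq_prime_pow_of_unique_prime_dvd hn0 huniq
      refine ⟨n.primeFactorsList.length, ?_⟩
      have hpow1 : (g : G) ^ (p ^ n.primeFactorsList.length) = 1 := by
        rw [← hnp, hn]; exact pow_orderOf_eq_one _
      have hcoe : ((g ^ (p ^ n.primeFactorsList.length) : ↥I) : G) = 1 := by
        push_cast
        exact hpow1
      exact Subtype.ext hcoe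
  haveI hfaith : FaithfulSMul G L₀ := by
    constructor
    intro m₁ m₂ h
    have hmem : m₂⁻¹ * m₁ ∈ I := by
      rw [hImem]
      intro z
      rw [mul_smul, h z, inv_smul_smul]
    rw [hIbot, Subgroup.mem_bot] at hmem
    exact (inv_mul_eq_one.mp hmem).symm
  have hArtin : finrank ↥(FixedPoints.subfield G L₀) L₀ = Nat.card G := by
    rw [Nat.card_eq_fintype_card]
    exact FixedPoints.finrank_eq_card G L₀
  -- Step A : linear independence bound over K₀
  choose lift hlift using hρ
  have hKL : finrank ↥(FixedPoints.subfield G L) L = Nat.card G := by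
    rw [Nat.card_eq_fintype_card]
    exact FixedPoints.finrank_eq_card G L
  have hcard : ∀ s : Finset L₀,
      (LinearIndependent ↥K₀ fun i : s => (i : L₀)) → s.card ≤ Nat.card G := by
    intro s hs
    have hli : LinearIndependent ↥(FixedPoints.subfield G L)
        (fun i : s => ((lift (i : L₀)) : L)) := by
      rw [Fintype.linearIndependent_iff]
      intro a ha
      by_contra hcon
      push_neg at hcon
      obtain ⟨j, hj⟩ := hcon
      set t := Finset.univ.filter (fun i : s => a i ≠ 0) with ht
      have htne : t.Nonempty := ⟨j, by simp [ht, hj]⟩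
      obtain ⟨i₀, hi₀t, hi₀min⟩ := t.exists_min_image (fun i => v ((a i : L))) htne
      have ha₀' : a i₀ ≠ 0 := (Finset.mem_filter.mp hi₀t).2
      have ha₀ : (a i₀ : L) ≠ 0 := fun h => ha₀' (Subtype.ext h)
      have hbO : ∀ i : s, ((a i : L) / (a i₀ : L)) ∈ O := by
        intro i
        rcases eq_or_ne ((a i : L)) 0 with h | h
        · rw [h, zero_div]; exact O.zero_mem
        · have hit : i ∈ t := by
            rw [ht, Finset.mem_filter]
            exact ⟨Finset.mem_univ i, fun hh => h (by rw [hh]; rfl)⟩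
          have hmin := hi₀min i hit
          rw [hO]
          right
          rw [div_eq_mul_inv, hmul _ _ h (inv_ne_zero ha₀), hvinv _ ha₀]
          omega
      set B : s → ↥O := fun i => ⟨(a i : L) / (a i₀ : L), hbO i⟩ with hB
      have hBfix : ∀ (σ : G) (i : s), σ • ((B i : L)) = (B i : L) := by
        intro σ i
        have h1 : σ • ((a i : L)) = (a i : L) := (a i).2 σ
        have h2 : σ • ((a i₀ : L)) = (a i₀ : L) := (a i₀).2 σ
        show σ • ((a i : L) / (a i₀ : L)) = (a i : L) / (a i₀ : L)
        rw [div_eq_mul_inv, smul_mul', smul_inv'', h1, h2]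
      have hsum0 : (∑ i, B i * lift (i : L₀)) = (0 : ↥O) := by
        apply Subtype.ext
        have hcoe : ((∑ i, B i * lift (i : L₀) : ↥O) : L)
            = ∑ i : s, (a i : L) / (a i₀ : L) * (lift (i : L₀) : L) := by
          push_cast
          rfl
        have hdiv : ∑ i : s, (a i : L) / (a i₀ : L) * (lift (i : L₀) : L)
            = (∑ i : s, (a i : L) * (lift (i : L₀) : L)) / (a i₀ : L) := by
          rw [Finset.sum_div]
          exact Finset.sum_congr rfl fun i _ => by ring
        have hz : ∑ i : s, (a i : L) * (lift (i : L₀) : L) = 0 := ha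
        rw [hcoe, hdiv, hz, zero_div]
        rfl
      have hρsum : ∑ i : s, ρ (B i) * (i : L₀) = 0 := by
        calc ∑ i : s, ρ (B i) * (i : L₀)
            = ρ (∑ i, B i * lift (i : L₀)) := by
              rw [map_sum]
              exact (Finset.sum_congr rfl fun i _ => by rw [map_mul, hlift]).symm
          _ = 0 := by rw [hsum0, map_zero]
      have hcK : ∀ i : s, ρ (B i) ∈ K₀ := fun i => (hK₀ _).mpr ⟨B i, fun σ => hBfix σ i, rfl⟩
      have hzero : ∀ i : s, (⟨ρ (B i), hcK i⟩ : ↥K₀) = 0 :=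
        Fintype.linearIndependent_iff.mp hs (fun i => ⟨ρ (B i), hcK i⟩) hρsum
      have h1 : ρ (B i₀) = 0 := congrArg Subtype.val (hzero i₀)
      have hBi₀ : B i₀ = 1 := by
        apply Subtype.ext
        show (a i₀ : L) / (a i₀ : L) = 1
        exact div_self ha₀
      rw [hBi₀, map_one] at h1
      exact one_ne_zero h1
    have hle := hli.fintype_card_le_finrank
    rw [Fintype.card_coe] at hle
    exact le_of_le_of_eq hle hKL
  -- assemble
  have hrank : Module.rank ↥K₀ L₀ ≤ (Nat.card G : Cardinal) := rank_le hcard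
  haveI hfdK₀ : FiniteDimensional ↥K₀ L₀ :=
    IsNoetherian.iff_fg.1 (IsNoetherian.iff_rank_lt_aleph0.2
      (lt_of_le_of_lt hrank (Cardinal.nat_lt_aleph0 _)))
  have hfr : finrank ↥K₀ L₀ ≤ Nat.card G := Module.finrank_le_of_rank_le hrank
  have hKF : K₀ ≤ FixedPoints.subfield G L₀ := by
    intro z hz
    obtain ⟨x, hfix, hx⟩ := (hK₀ z).mp hz
    intro σ
    rw [← hx, ← hcompat σ x]
    congr 1
    exact Subtype.ext (hfix σ)
  set E : IntermediateField ↥K₀ L₀ :=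
    Subfield.toIntermediateField (FixedPoints.subfield G L₀) (fun x => hKF x.2) with hE
  have hEfr : finrank ↥E L₀ = Nat.card G := hArtin
  have htower : finrank ↥K₀ ↥E * finrank ↥E L₀ = finrank ↥K₀ L₀ := finrank_mul_finrank _ _ _
  have hnpos : 0 < Nat.card G := Nat.card_pos
  have hfrpos : 0 < finrank ↥K₀ L₀ := finrank_pos
  rw [hEfr] at htower
  have h1 : finrank ↥K₀ ↥E = 1 := by
    have hle1 : finrank ↥K₀ ↥E ≤ 1 :=
      Nat.le_of_mul_le_mul_right (by rw [htower, one_mul]; exact hfr) hnpos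
    have hne0 : finrank ↥K₀ ↥E ≠ 0 := by
      intro h0; rw [h0, zero_mul] at htower; omega
    omega
  have hbot : E = ⊥ := IntermediateField.finrank_eq_one_iff.mp h1
  have hFK : FixedPoints.subfield G L₀ ≤ K₀ := by
    intro z hz
    have hzE : z ∈ E := hz
    rw [hbot, IntermediateField.mem_bot] at hzE
    obtain ⟨c, hc⟩ := hzE
    rw [← hc]
    exact c.2
  refine ⟨le_antisymm hFK hKF, ?_⟩
  rw [← htower, h1, one_mul]
end
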